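/- Second periodicity theorem: for each k ∈ {0,1,2,3}, if N ≥ 1 and p, q are natural numbers with 2^(N−1) ≤ p < 2^N and 2^(N−1) ≤ q < 2^N, then for every natural number m one has ω_k(p, q) = ω_k(p + m·2^N, q + m·2^N). -/

import Mathlib

/-- The five states of the Cayley–Dickson twist tree:
corner (C), top (T), left (L), diagonal (D) and interior (I). -/
inductive TwistState : Type
  | C | T | L | D | I
deriving DecidableEq

open TwistState

/-- The interior-node sign `i_k(a,b)` for the doubling product `P_k`, `k ∈ {0,1,2,3}`. -/
def iTwist (k : ℕ) (a b : Bool) : ℤ :=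
  match k with
  | 0 => if a = false ∧ b = false then -1 else 1
  | 1 => -1
  | 2 => 1
  | _ => if a = false ∧ b = false then 1 else -1

/-- One step of the twist-tree finite-state computation: from the current
(state, sign) pair, read a doublet of bits `(a, b)` and move to the new
(state, sign) pair. -/
def twistStep (k : ℕ) : TwistState × ℤ → Bool × Bool → TwistState × ℤ
  | (C, s), (false, false) => (C, s)
  | (C, s), (false, true)  => (T, s)
  | (C, s), (true, false)  => (L, s)
  | (C, s), (true, true)   => (D, -s)
  | (T, s), (false, false) => (T, s)
  | (T, s), (false, true)  => (T, s)
  | (T, s), (true, false)  => (I, s)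
  | (T, s), (true, true)   => (I, -s)
  | (L, s), (false, false) => (L, s)
  | (L, s), (false, true)  => (I, -s)
  | (L, s), (true, false)  => (L, s)
  | (L, s), (true, true)   => (I, s)
  | (D, s), (false, false) => (D, s)
  | (D, s), (false, true)  => (I, -s)
  | (D, s), (true, false)  => (I, s)
  | (D, s), (true, true)   => (D, s)
  | (I, s), (a, b)         => (I, s * iTwist k a b)

/-- The Cayley–Dickson twist `ω_k(p,q)` for the doubling product `P_k`:
write `p` and `q` in binary with a common number of bits (padding with
leading zeros), read the doublets of bits from most significant to least
significant, running the twist-tree automaton starting at state `C` with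
sign `+1`; the result is the final sign. -/
def omegaTwist (k : ℕ) (p q : ℕ) : ℤ :=
  (((List.range (max (Nat.size p) (Nat.size q))).reverse.map
      (fun i => (p.testBit i, q.testBit i))).foldl (twistStep k) (C, 1)).2

/-- Invariant: feeding equal doublets starting from `(C,1)` keeps the
state in `{(C,1), (D,-1)}`. -/
lemma foldl_diag (k : ℕ) : ∀ (L : List (Bool × Bool)) (s : TwistState × ℤ),
    (∀ x ∈ L, x.1 = x.2) → (s = (C, 1) ∨ s = (D, -1)) →
    L.foldl (twistStep k) s = (C, 1) ∨ L.foldl (twistStep k) s = (D, -1) := by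
  intro L
  induction L with
  | nil => intro s _ hs; simpa using hs
  | cons x L ih =>
    intro s hL hs
    rcases x with ⟨a, b⟩
    have hab : a = b := hL (a, b) (by simp)
    subst hab
    have : twistStep k s (a, a) = (C, 1) ∨ twistStep k s (a, a) = (D, -1) := by
      rcases hs with h | h <;> subst h <;> cases a <;> simp [twistStep]
    exact ih _ (fun x hx => hL x (by simp [hx])) this

lemma testBit_div_pow (x n j : ℕ) : (x / 2 ^ n).testBit j = x.testBit (n + j) := by
  simp [Nat.testBit_eq_decide_div_mod_eq, Nat.div_div_eq_div_mul, pow_add]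

/-- Second periodicity theorem: for each `k ∈ {0,1,2,3}`, if `N ≥ 1`,
`2^(N-1) ≤ p < 2^N` and `2^(N-1) ≤ q < 2^N`, then for every natural number
`m`, `ω_k(p, q) = ω_k(p + m·2^N, q + m·2^N)`. -/
theorem omegaTwist_second_periodicity :
    ∀ k ∈ ({0, 1, 2, 3} : Finset ℕ), ∀ N p q : ℕ, 1 ≤ N →
      2 ^ (N - 1) ≤ p → p < 2 ^ N → 2 ^ (N - 1) ≤ q → q < 2 ^ N →
      ∀ m : ℕ,
        omegaTwist k p q = omegaTwist k (p + m * 2 ^ N) (q + m * 2 ^ N) := by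
  intro k _ N p q hN hp1 hp2 hq1 hq2 m
  rcases Nat.eq_zero_or_pos m with rfl | hm
  · simp
  set M := Nat.size m with hM
  have hM1 : 1 ≤ M := Nat.lt_size.2 (by rw [pow_zero]; exact hm)
  have hm2 : m < 2 ^ M := Nat.lt_size_self m
  have hm3 : 2 ^ (M - 1) ≤ m := Nat.lt_size.1 (by omega)
  -- sizes
  have hsp : Nat.size p = N :=
    le_antisymm (Nat.size_le.2 hp2) (by have := Nat.lt_size.2 hp1; omega)
  have hsq : Nat.size q = N :=
    le_antisymm (Nat.size_le.2 hq2) (by have := Nat.lt_size.2 hq1; omega)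
  have hsize : ∀ x : ℕ, 2 ^ (N - 1) ≤ x → x < 2 ^ N →
      Nat.size (x + m * 2 ^ N) = N + M := by
    intro x hx1 hx2
    refine le_antisymm (Nat.size_le.2 ?_) ?_
    · have : x + m * 2 ^ N < (m + 1) * 2 ^ N := by nlinarith [pow_pos (show 0 < 2 by norm_num) N]
      calc x + m * 2 ^ N < (m + 1) * 2 ^ N := this
        _ ≤ 2 ^ M * 2 ^ N := by
            exact Nat.mul_le_mul_right _ (by omega)
        _ = 2 ^ (N + M) := by rw [← pow_add]; ring_nf
    · have h1 : 2 ^ (N + M - 1) ≤ x + m * 2 ^ N := by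
        calc 2 ^ (N + M - 1) = 2 ^ (M - 1) * 2 ^ N := by
              rw [← pow_add]; congr 1; omega
          _ ≤ m * 2 ^ N := Nat.mul_le_mul_right _ hm3
          _ ≤ x + m * 2 ^ N := Nat.le_add_left _ _
      have := Nat.lt_size.2 h1
      omega
  -- bit facts
  have hdiv : ∀ x : ℕ, x < 2 ^ N → (x + m * 2 ^ N) / 2 ^ N = m := by
    intro x hx
    rw [Nat.add_mul_div_right _ _ (pow_pos (by norm_num) N), Nat.div_eq_of_lt hx, Nat.zero_add]
  have hmod : ∀ x : ℕ, x < 2 ^ N → (x + m * 2 ^ N) % 2 ^ N = x := by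
    intro x hx
    rw [Nat.add_mul_mod_self_right, Nat.mod_eq_of_lt hx]
  have hlowbit : ∀ x : ℕ, x < 2 ^ N → ∀ i < N, (x + m * 2 ^ N).testBit i = x.testBit i := by
    intro x hx i hi
    have := Nat.testBit_mod_two_pow (x + m * 2 ^ N) N i
    rw [hmod x hx] at this
    simp [hi] at this
    exact this.symm
  have hhighbit : ∀ x : ℕ, x < 2 ^ N → ∀ j, (x + m * 2 ^ N).testBit (N + j) = m.testBit j := by
    intro x hx j
    rw [← testBit_div_pow, hdiv x hx]
  -- top bit of p, q is true
  have htop : ∀ x : ℕ, 2 ^ (N - 1) ≤ x → x < 2 ^ N → x.testBit (N - 1) = true := by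
    intro x hx1 hx2
    rw [Nat.testBit_eq_decide_div_mod_eq]
    have : x / 2 ^ (N - 1) = 1 := by
      refine Nat.div_eq_of_lt_le (by simpa using hx1) ?_
      have : 2 ^ N = 2 * 2 ^ (N - 1) := by
        rw [← pow_succ']; congr 1; omega
      omega
    simp [this]
  -- unfold lists
  unfold omegaTwist
  rw [hsp, hsq, hsize p hp1 hp2, hsize q hq1 hq2]
  simp only [max_self]
  have hNsplit : N + M = ((N - 1) + 1) + M := by omega
  -- the list for the shifted pair
  rw [List.range_add, List.reverse_append, List.map_append]
  -- prefix part : doublets from m, diagonal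
  set P := p + m * 2 ^ N
  set Q := q + m * 2 ^ N
  set A := (List.map (fun x => N + x) (List.range M)).reverse.map
      (fun i => (P.testBit i, Q.testBit i)) with hA
  set f := fun i => (P.testBit i, Q.testBit i)
  rw [List.foldl_append]
  have hAdiag : ∀ x ∈ A, x.1 = x.2 := by
    intro x hx
    rw [hA] at hx
    simp only [List.mem_map, List.mem_reverse, List.mem_range] at hx
    obtain ⟨i, ⟨j, hj, rfl⟩, rfl⟩ := hx
    simp [f, P, Q, hhighbit p hp2, hhighbit q hq2]
  have hAres := foldl_diag k A (C, 1) hAdiag (Or.inl rfl)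
  -- the low part lists
  have hNr : List.range N = List.range (N - 1) ++ [N - 1] := by
    have : N = (N - 1) + 1 := by omega
    rw [this, List.range_succ]
    simp
  have hBP : (List.range N).reverse.map f
      = ((true, true) :: (List.range (N-1)).reverse.map f) := by
    rw [hNr]; simp only [List.reverse_append, List.reverse_cons, List.reverse_nil,
      List.nil_append, List.singleton_append, List.map_cons]
    congr 1
    simp only [f]
    rw [hlowbit p hp2 _ (by omega), hlowbit q hq2 _ (by omega),
      htop p hp1 hp2, htop q hq1 hq2]
  have hBp : (List.range N).reverse.map (fun i => (p.testBit i, q.testBit i))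
      = ((true, true) :: (List.range (N-1)).reverse.map (fun i => (p.testBit i, q.testBit i))) := by
    rw [hNr]; simp only [List.reverse_append, List.reverse_cons, List.reverse_nil,
      List.nil_append, List.singleton_append, List.map_cons]
    congr 1
    rw [htop p hp1 hp2, htop q hq1 hq2]
  have hrest : (List.range (N-1)).reverse.map f
      = (List.range (N-1)).reverse.map (fun i => (p.testBit i, q.testBit i)) := by
    apply List.map_congr_left
    intro i hi
    simp only [List.mem_reverse, List.mem_range] at hi
    simp only [f]
    rw [hlowbit p hp2 _ (by omega), hlowbit q hq2 _ (by omega)]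
  rw [hBP, hBp, hrest]
  simp only [List.foldl_cons]
  have hstep : twistStep k (A.foldl (twistStep k) (C, 1)) (true, true) = (D, -1) := by
    rcases hAres with h | h <;> rw [h] <;> simp [twistStep]
  rw [hstep]
  have : twistStep k ((C : TwistState), (1 : ℤ)) (true, true) = (D, -1) := by simp [twistStep]
  rw [this]
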